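/- arXiv:1001.2050 — 6 statements merged into one kernel-verified Lean document; each statement's English description precedes it below -/
import Mathlib

section
/- Let D ⊆ ℝᵈ be a nonempty set, f : ℝᵈ → ℝ, h : ℝᵈ → ℝᵐ, and ε ≥ 0. For a perturbation level s ≥ 0 define the feasible set P(s) = {x ∈ D : h(x)ᵢ + s ≤ 0 for all i} and the optimal value v(s) = inf {f(x) : x ∈ P(s)}, and say λ ∈ ℝᵐ with λ ⪰ 0 is a Lagrange multiplier at level s if v(s) = inf_{x ∈ D} ( f(x) + Σᵢ λᵢ (h(x)ᵢ + s) ). Assume P(ε) is nonempty, v(0) and v(ε) are real numbers, and λ₀, λ_ε are Lagrange multipliers at levels 0 and ε respectively. Then |v(0) − v(ε)| ≤ ε · max(‖λ₀‖₁, ‖λ_ε‖₁), where ‖·‖₁ denotes the ℓ¹ norm. -/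
open Finset

/-- Lemma 1 of the paper (sensitivity lemma): tightening the inequality constraints
`h(x) ⪯ 0` to `h(x) + ε·1 ⪯ 0` changes the optimal value by at most `ε` times the
`ℓ¹` norm of a Lagrange multiplier. -/
theorem sensitivity_lemma
    {d m : ℕ} (D : Set (Fin d → ℝ)) (hD : D.Nonempty)
    (f : (Fin d → ℝ) → ℝ) (h : (Fin d → ℝ) → Fin m → ℝ)
    (ε : ℝ) (hε : 0 ≤ ε)
    (P : ℝ → Set (Fin d → ℝ))
    (hP : ∀ s, P s = {x ∈ D | ∀ i, h x i + s ≤ 0})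
    (hPε : (P ε).Nonempty)
    (v0 vε : ℝ)
    (hv0 : IsGLB (f '' P 0) v0) (hvε : IsGLB (f '' P ε) vε)
    (lam0 lamε : Fin m → ℝ)
    (hlam0 : ∀ i, 0 ≤ lam0 i) (hlamε : ∀ i, 0 ≤ lamε i)
    (hlag0 : IsGLB ((fun x => f x + ∑ i, lam0 i * (h x i + 0)) '' D) v0)
    (hlagε : IsGLB ((fun x => f x + ∑ i, lamε i * (h x i + ε)) '' D) vε) :
    |v0 - vε| ≤ ε * max (∑ i, |lam0 i|) (∑ i, |lamε i|) := by
  -- P ε ⊆ P 0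
  have hsub : P ε ⊆ P 0 := by
    intro x hx
    rw [hP] at hx ⊢
    exact ⟨hx.1, fun i => by have := hx.2 i; linarith⟩
  -- v0 ≤ vε
  have h1 : v0 ≤ vε := hvε.2 (fun y hy => hv0.1 (Set.image_mono hsub hy))
  -- vε ≤ v0 + ε * ∑ |lamε i|
  have h2 : vε - ε * ∑ i, |lamε i| ≤ v0 := by
    apply hv0.2
    rintro y ⟨x, hx, rfl⟩
    rw [hP] at hx
    have hle : vε ≤ f x + ∑ i, lamε i * (h x i + ε) :=
      hlagε.1 ⟨x, hx.1, rfl⟩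
    have hbound : ∑ i, lamε i * (h x i + ε) ≤ ε * ∑ i, |lamε i| := by
      rw [Finset.mul_sum]
      apply Finset.sum_le_sum
      intro i _
      have h0 : h x i + 0 ≤ 0 := hx.2 i
      have : h x i + ε ≤ ε := by linarith
      rw [abs_of_nonneg (hlamε i)]
      calc lamε i * (h x i + ε) ≤ lamε i * ε := by
            exact mul_le_mul_of_nonneg_left this (hlamε i)
        _ = ε * lamε i := mul_comm _ _
    linarith
  have h3 : ∑ i, |lamε i| ≤ max (∑ i, |lam0 i|) (∑ i, |lamε i|) := le_max_right _ _
  have h4 : 0 ≤ ∑ i, |lamε i| := Finset.sum_nonneg fun i _ => abs_nonneg _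
  rw [abs_sub_comm, abs_of_nonneg (by linarith)]
  calc vε - v0 ≤ ε * ∑ i, |lamε i| := by linarith
    _ ≤ ε * max (∑ i, |lam0 i|) (∑ i, |lamε i|) := mul_le_mul_of_nonneg_left h3 hε
end

section
/- Let E = EuclideanSpace ℝ (Fin d), let C ⊆ E be a convex set, and let g : E → ℝ be a convex function that is differentiable with gradient ∇g. Let w* ∈ C, let t > 0, and let w be a function from an open interval around t into E with w(t) ∈ C, differentiable at t with derivative w′(t) = (s − w(t))/t for some s ∈ C satisfying ⟪∇g(w(t)), s⟫ ≤ ⟪∇g(w(t)), w*⟫. Then the function L(τ) = τ·g(w(τ)) is differentiable at t and its derivative satisfies L′(t) ≤ g(w*). -/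
open RealInnerProductSpace

lemma grad_ineq {E : Type*} [NormedAddCommGroup E] [InnerProductSpace ℝ E] [CompleteSpace E]
    {g : E → ℝ} (hg : ConvexOn ℝ Set.univ g) {G x : E} (hG : HasGradientAt g G x) (y : E) :
    g x + ⟪G, y - x⟫ ≤ g y := by
  set φ : ℝ → ℝ := fun τ => g (x + τ • (y - x)) with hφdef
  have hline : HasDerivAt (fun τ : ℝ => x + τ • (y - x)) (y - x) 0 := by
    simpa using ((hasDerivAt_id (0:ℝ)).smul_const (y - x)).const_add x
  have hφ' : HasDerivAt φ ⟪G, y - x⟫ 0 := by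
    have hG' : HasFDerivAt g ((InnerProductSpace.toDual ℝ E) G) (x + (0:ℝ) • (y - x)) := by
      simpa using hasGradientAt_iff_hasFDerivAt.mp hG
    have := hG'.comp_hasDerivAt 0 hline
    simp only [InnerProductSpace.toDual_apply_apply] at this; exact this
  have hφc : ConvexOn ℝ Set.univ φ := by
    have := hg.comp_affineMap (AffineMap.lineMap x y : ℝ →ᵃ[ℝ] E)
    have heq : ∀ τ : ℝ, φ τ = (g ∘ (AffineMap.lineMap x y : ℝ →ᵃ[ℝ] E)) τ := by
      intro τ
      show g (x + τ • (y - x)) = g (AffineMap.lineMap x y τ)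
      congr 1
      simp [AffineMap.lineMap_apply]
      module
    have h1 : ConvexOn ℝ Set.univ (g ∘ (AffineMap.lineMap x y : ℝ →ᵃ[ℝ] E)) := by
      simpa using this
    rw [funext heq]; exact h1
  have := hφc.le_slope_of_hasDerivAt (Set.mem_univ 0) (Set.mem_univ 1) one_pos hφ'
  have hs : slope φ 0 1 = g y - g x := by
    simp [slope, hφdef]
  linarith [this.trans_eq hs]

/-- Lyapunov drift computation from the proof of Lemma 7 of the paper: along a
trajectory `w` with `w′(t) = (s − w(t))/t` where `s ∈ C` minimizes the inner product
with the gradient `∇g(w(t))` at least as well as `w* ∈ C`, the Lyapunov function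
`L(τ) = τ·g(w(τ))` is differentiable at `t` with `L′(t) ≤ g(w*)`. -/
theorem lyapunov_drift
    {d : ℕ} (C : Set (EuclideanSpace ℝ (Fin d))) (hC : Convex ℝ C)
    (g : EuclideanSpace ℝ (Fin d) → ℝ) (hg : ConvexOn ℝ Set.univ g)
    (g' : EuclideanSpace ℝ (Fin d) → EuclideanSpace ℝ (Fin d))
    (hg' : ∀ x, HasGradientAt g (g' x) x)
    (wstar : EuclideanSpace ℝ (Fin d)) (hwstar : wstar ∈ C)
    (t : ℝ) (ht : 0 < t)
    (w : ℝ → EuclideanSpace ℝ (Fin d)) (hwC : w t ∈ C)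
    (s : EuclideanSpace ℝ (Fin d)) (hs : s ∈ C)
    (hw' : HasDerivAt w (t⁻¹ • (s - w t)) t)
    (hopt : ⟪g' (w t), s⟫ ≤ ⟪g' (w t), wstar⟫) :
    ∃ L' : ℝ, HasDerivAt (fun τ => τ * g (w τ)) L' t ∧ L' ≤ g wstar := by
  set G := g' (w t)
  have hgw : HasDerivAt (fun τ => g (w τ)) ⟪G, t⁻¹ • (s - w t)⟫ t := by
    have := (hasGradientAt_iff_hasFDerivAt.mp (hg' (w t))).comp_hasDerivAt t hw'
    convert this using 1 <;> rfl
  have hL : HasDerivAt (fun τ => τ * g (w τ))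
      (1 * g (w t) + t * ⟪G, t⁻¹ • (s - w t)⟫) t := (hasDerivAt_id t).mul hgw
  refine ⟨_, hL, ?_⟩
  have hinner : t * ⟪G, t⁻¹ • (s - w t)⟫ = ⟪G, s - w t⟫ := by
    rw [real_inner_smul_right]
    field_simp
  have h1 : g (w t) + ⟪G, wstar - w t⟫ ≤ g wstar := grad_ineq hg (hg' (w t)) wstar
  have h2 : ⟪G, s - w t⟫ ≤ ⟪G, wstar - w t⟫ := by
    rw [inner_sub_right, inner_sub_right]; linarith
  rw [one_mul, hinner]
  linarith
end

section
/- Let E = EuclideanSpace ℝ (Fin d), let C ⊆ E be a convex set, and let g : E → ℝ be a convex function that is differentiable with gradient ∇g. Let w* ∈ C satisfy g(w*) ≤ g(v) for all v ∈ C (so g* := g(w*) is the minimum of g over C). Let w : (0,∞) → E be a function with w(t) ∈ C for all t > 0, differentiable at every t > 0 with derivative w′(t) = (s(t) − w(t))/t where s(t) ∈ C and ⟪∇g(w(t)), s(t)⟫ ≤ ⟪∇g(w(t)), v⟫ for all v ∈ C. Assume moreover that t·g(w(t)) → 0 as t → 0⁺. Then g(w(t)) = g* for every t > 0. -/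
open RealInnerProductSpace Filter

/-- Gradient inequality for a convex differentiable function:
`g y ≥ g x + ⟪∇g(x), y - x⟫`. -/
lemma convex_gradient_ineq {d : ℕ} (g : EuclideanSpace ℝ (Fin d) → ℝ)
    (hg : ConvexOn ℝ Set.univ g) {G x : EuclideanSpace ℝ (Fin d)}
    (hG : HasGradientAt g G x) (y : EuclideanSpace ℝ (Fin d)) :
    g x + ⟪G, y - x⟫ ≤ g y := by
  set φ : ℝ → ℝ := fun r => g (x + r • (y - x)) with hφ
  have hφconv : ConvexOn ℝ Set.univ φ := by
    have := hg.comp_affineMap (AffineMap.lineMap x y : ℝ →ᵃ[ℝ] _)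
    convert this using 1
    all_goals try rfl
    funext r
    simp [φ, Function.comp, AffineMap.lineMap_apply_module', add_comm]
  have hline : HasDerivAt (fun r : ℝ => x + r • (y - x)) (y - x) 0 := by
    simpa using ((hasDerivAt_id (0:ℝ)).smul_const (y - x)).const_add x
  have hd : HasDerivAt φ ⟪G, y - x⟫ 0 := by
    have hF : HasFDerivAt g ((InnerProductSpace.toDual ℝ _) G) (x + (0:ℝ) • (y - x)) := by
      simpa using hasGradientAt_iff_hasFDerivAt.mp hG
    have := hF.comp_hasDerivAt (0:ℝ) hline
    simpa only [φ, Function.comp_def, InnerProductSpace.toDual_apply_apply] using this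
  have hs := hφconv.le_slope_of_hasDerivAt (Set.mem_univ 0) (Set.mem_univ 1)
    one_pos hd
  have : ⟪G, y - x⟫ ≤ φ 1 - φ 0 := by
    simpa [slope_def_field] using hs
  simp only [φ, zero_smul, add_zero, one_smul, add_sub_cancel] at this
  linarith

/-- Lemma 7 of the paper (lem_optimal_cost): along a greedy primal–dual trajectory
`w` in the convex feasible set `C` with `w′(t) = (s(t) − w(t))/t`, where `s(t) ∈ C`
minimizes the inner product with the gradient `∇g(w(t))` over `C`, and with
`t·g(w(t)) → 0` as `t → 0⁺`, the convex objective `g` attains its minimum over `C`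
at every point of the trajectory: `g(w(t)) = g(w*)` for all `t > 0`. -/
theorem fluid_limit_optimal_cost
    {d : ℕ} (C : Set (EuclideanSpace ℝ (Fin d))) (hC : Convex ℝ C)
    (g : EuclideanSpace ℝ (Fin d) → ℝ) (hg : ConvexOn ℝ Set.univ g)
    (g' : EuclideanSpace ℝ (Fin d) → EuclideanSpace ℝ (Fin d))
    (hg' : ∀ x, HasGradientAt g (g' x) x)
    (wstar : EuclideanSpace ℝ (Fin d)) (hwstar : wstar ∈ C)
    (hmin : ∀ v ∈ C, g wstar ≤ g v)
    (w s : ℝ → EuclideanSpace ℝ (Fin d))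
    (hwC : ∀ t > (0 : ℝ), w t ∈ C)
    (hsC : ∀ t > (0 : ℝ), s t ∈ C)
    (hw' : ∀ t > (0 : ℝ), HasDerivAt w (t⁻¹ • (s t - w t)) t)
    (hopt : ∀ t > (0 : ℝ), ∀ v ∈ C, ⟪g' (w t), s t⟫ ≤ ⟪g' (w t), v⟫)
    (hzero : Tendsto (fun t => t * g (w t)) (nhdsWithin 0 (Set.Ioi 0)) (nhds 0)) :
    ∀ t > (0 : ℝ), g (w t) = g wstar := by
  set D := g wstar with hD
  set φ : ℝ → ℝ := fun t => t * g (w t) - D * t with hφ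
  -- derivative of φ on (0, ∞)
  have hderiv : ∀ t > (0 : ℝ),
      HasDerivAt φ (g (w t) + ⟪g' (w t), s t - w t⟫ - D) t := by
    intro t ht
    have hgw : HasDerivAt (fun u => g (w u)) ⟪g' (w t), t⁻¹ • (s t - w t)⟫ t := by
      have := (hasGradientAt_iff_hasFDerivAt.mp (hg' (w t))).comp_hasDerivAt t (hw' t ht)
      simpa only [Function.comp_def, InnerProductSpace.toDual_apply_apply] using this
    have h1 : HasDerivAt (fun u => u * g (w u))
        (1 * g (w t) + t * ⟪g' (w t), t⁻¹ • (s t - w t)⟫) t :=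
      (hasDerivAt_id t).mul hgw
    have h2 : HasDerivAt (fun u : ℝ => D * u) D t := by
      simpa using (hasDerivAt_id t).const_mul D
    have h3 := h1.sub h2
    have heq : 1 * g (w t) + t * ⟪g' (w t), t⁻¹ • (s t - w t)⟫ - D
        = g (w t) + ⟪g' (w t), s t - w t⟫ - D := by
      rw [one_mul, real_inner_smul_right]
      field_simp
    rw [heq] at h3
    exact h3
  -- the derivative is nonpositive
  have hnonpos : ∀ t > (0 : ℝ), g (w t) + ⟪g' (w t), s t - w t⟫ - D ≤ 0 := by
    intro t ht
    have hgrad := convex_gradient_ineq g hg (hg' (w t)) wstar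
    have hs := hopt t ht wstar hwstar
    have : ⟪g' (w t), s t - w t⟫ ≤ ⟪g' (w t), wstar - w t⟫ := by
      rw [inner_sub_right, inner_sub_right]
      linarith
    linarith
  -- φ is antitone on (0, ∞)
  have hanti : AntitoneOn φ (Set.Ioi 0) := by
    apply antitoneOn_of_deriv_nonpos (convex_Ioi 0)
    · intro t ht
      exact ((hderiv t ht).continuousAt).continuousWithinAt
    · intro t ht
      rw [interior_Ioi] at ht
      exact ((hderiv t ht).differentiableAt).differentiableWithinAt
    · intro t ht
      rw [interior_Ioi] at ht
      rw [(hderiv t ht).deriv]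
      exact hnonpos t ht
  -- φ tends to 0 at 0⁺
  have hlim : Tendsto φ (nhdsWithin 0 (Set.Ioi 0)) (nhds 0) := by
    have h2 : Tendsto (fun t : ℝ => D * t) (nhdsWithin 0 (Set.Ioi 0)) (nhds 0) := by
      have : Tendsto (fun t : ℝ => D * t) (nhds 0) (nhds (D * 0)) :=
        (continuous_const.mul continuous_id).tendsto 0
      simpa using this.mono_left nhdsWithin_le_nhds
    simpa using hzero.sub h2
  intro t ht
  -- φ t ≤ 0
  have hφt : φ t ≤ 0 := by
    refine ge_of_tendsto hlim ?_
    filter_upwards [Ioo_mem_nhdsGT ht] with ε hε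
    exact hanti hε.1 ht hε.2.le
  have hge : D ≤ g (w t) := hmin _ (hwC t ht)
  have : t * g (w t) ≤ D * t := by
    simp only [φ] at hφt; linarith
  nlinarith
end

section
/- Let E be a real vector space, F ⊆ E a set, f, q : E → ℝ with q(w) ≥ 0 for all w ∈ F, and let α > 1, β > 0, ε > 0 be real numbers. Assume: (i) f(w) ≥ f_min for all w ∈ F for some real f_min; (ii) there exists w₀ ∈ F with q(w₀) = 0; (iii) w_p ∈ F minimizes the penalized objective w ↦ f(w) + (β/α)·q(w)^α over F; and (iv) β ≥ α·(f(w₀) − f_min)·(2/ε)^α. Then q(w_p) ≤ ε/2. -/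
/-- Lemma 8 of the paper (lem_opt1): for a sufficiently large penalty parameter `β`,
any minimizer of the penalized objective `f + (β/α)·qᵅ` over `F` has penalty level
`q(w_p) ≤ ε/2`. -/
theorem penalty_small_at_penalized_min
    {E : Type*} [AddCommGroup E] [Module ℝ E]
    (F : Set E) (f q : E → ℝ) (hq : ∀ w ∈ F, 0 ≤ q w)
    (α β ε fmin : ℝ) (hα : 1 < α) (hβ : 0 < β) (hε : 0 < ε)
    (hfmin : ∀ w ∈ F, fmin ≤ f w)
    (w₀ : E) (hw₀ : w₀ ∈ F) (hq₀ : q w₀ = 0)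
    (wp : E) (hwp : wp ∈ F)
    (hmin : ∀ w ∈ F, f wp + (β / α) * q wp ^ α ≤ f w + (β / α) * q w ^ α)
    (hβbig : α * (f w₀ - fmin) * (2 / ε) ^ α ≤ β) :
    q wp ≤ ε / 2 := by
  have hαpos : (0:ℝ) < α := by linarith
  have h1 := hmin w₀ hw₀
  rw [hq₀, Real.zero_rpow (ne_of_gt hαpos)] at h1
  have h2 : (β/α) * q wp ^ α ≤ f w₀ - fmin := by
    have := hfmin wp hwp; linarith
  by_contra h
  push_neg at h
  have h3 : (ε/2)^α < q wp ^ α :=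
    Real.rpow_lt_rpow (by positivity) h hαpos
  have hba : (f w₀ - fmin) * (2/ε)^α ≤ β/α := by
    rw [le_div_iff₀ hαpos]; linarith [hβbig]
  have hkey : (2/ε)^α * (ε/2)^α = 1 := by
    rw [← Real.mul_rpow (by positivity) (by positivity)]
    rw [show (2/ε) * (ε/2) = 1 by field_simp, Real.one_rpow]
  have h4 : (β/α) * (ε/2)^α < (β/α) * q wp ^ α :=
    mul_lt_mul_of_pos_left h3 (by positivity)
  have h5 : (f w₀ - fmin) * (2/ε)^α * (ε/2)^α ≤ (β/α) * (ε/2)^α :=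
    mul_le_mul_of_nonneg_right hba (by positivity)
  rw [mul_assoc, hkey, mul_one] at h5
  linarith
end

section
/- Let E = EuclideanSpace ℝ (Fin d), C ⊆ E a convex set, f, p : E → ℝ functions with p(w) ≥ 0 for all w ∈ C, β > 0, and let g = f + β·p be convex and differentiable with gradient ∇g. Let w* ∈ C satisfy g(w*) ≤ g(v) for all v ∈ C, and let w₀ ∈ C satisfy p(w₀) = 0. Let w : (0,∞) → E be a trajectory with w(t) ∈ C for all t > 0, differentiable at every t > 0 with derivative w′(t) = (s(t) − w(t))/t, where s(t) ∈ C and ⟪∇g(w(t)), s(t)⟫ ≤ ⟪∇g(w(t)), v⟫ for all v ∈ C, and with t·g(w(t)) → 0 as t → 0⁺. Then f(w(t)) ≤ f(w₀) for all t > 0; in particular the cost along the trajectory never exceeds the optimal value of f over {w ∈ C : p(w) = 0}. -/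
open RealInnerProductSpace Filter

/-- Subgradient inequality for a convex function with a gradient. -/
lemma gradient_convex_ineq {d : ℕ} {g : EuclideanSpace ℝ (Fin d) → ℝ}
    (hg : ConvexOn ℝ Set.univ g) {x y G : EuclideanSpace ℝ (Fin d)}
    (h : HasGradientAt g G x) : ⟪G, y - x⟫ ≤ g y - g x := by
  set c : ℝ → EuclideanSpace ℝ (Fin d) := fun τ => x + τ • (y - x) with hc
  have hcurve : HasDerivAt c (y - x) 0 := by
    have : HasDerivAt (fun τ : ℝ => τ • (y - x)) ((1 : ℝ) • (y - x)) 0 :=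
      (hasDerivAt_id (0 : ℝ)).smul_const (y - x)
    have := this.const_add x
    simp only [one_smul] at this
    exact this
  have hφ : HasDerivAt (fun τ => g (c τ)) ⟪G, y - x⟫ 0 := by
    have hF := (hasGradientAt_iff_hasFDerivAt.mp h)
    have hx0 : c 0 = x := by simp [hc]
    have hF' : HasFDerivAt g ((InnerProductSpace.toDual ℝ _) G) (c 0) := by
      rw [hx0]; exact hF
    have := hF'.comp_hasDerivAt 0 hcurve
    simp at this
    exact this
  have hconv : ConvexOn ℝ Set.univ (fun τ => g (c τ)) := by
    have haff : ConvexOn ℝ ((AffineMap.lineMap x y : ℝ →ᵃ[ℝ] _) ⁻¹' Set.univ)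
        (g ∘ (AffineMap.lineMap x y : ℝ →ᵃ[ℝ] _)) := hg.comp_affineMap _
    have : ∀ τ : ℝ, g (c τ) = (g ∘ (AffineMap.lineMap x y : ℝ →ᵃ[ℝ] _)) τ := by
      intro τ; simp [hc, AffineMap.lineMap_apply, add_comm]
    simpa [Set.preimage_univ, funext this] using haff
  have hslope := hconv.le_slope_of_hasDerivAt (Set.mem_univ (0 : ℝ))
      (Set.mem_univ (1 : ℝ)) one_pos hφ
  have : slope (fun τ => g (c τ)) 0 1 = g y - g x := by
    simp [slope_def_field, hc]
  rw [this] at hslope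
  exact hslope

/-- Deterministic (fluid-limit) content of Theorem 1 of the paper (optimal cost):
along a greedy primal–dual trajectory for the penalized objective `g = f + β·p`,
the cost `f` never exceeds the value of `f` at any point `w₀ ∈ C` where the
(nonnegative) penalty vanishes. -/
theorem trajectory_cost_optimal
    {d : ℕ} (C : Set (EuclideanSpace ℝ (Fin d))) (hC : Convex ℝ C)
    (f p g : EuclideanSpace ℝ (Fin d) → ℝ)
    (hp : ∀ w ∈ C, 0 ≤ p w) (β : ℝ) (hβ : 0 < β)
    (hgdef : ∀ w, g w = f w + β * p w)
    (hg : ConvexOn ℝ Set.univ g)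
    (g' : EuclideanSpace ℝ (Fin d) → EuclideanSpace ℝ (Fin d))
    (hg' : ∀ x, HasGradientAt g (g' x) x)
    (wstar : EuclideanSpace ℝ (Fin d)) (hwstar : wstar ∈ C)
    (hmin : ∀ v ∈ C, g wstar ≤ g v)
    (w₀ : EuclideanSpace ℝ (Fin d)) (hw₀ : w₀ ∈ C) (hp₀ : p w₀ = 0)
    (w s : ℝ → EuclideanSpace ℝ (Fin d))
    (hwC : ∀ t > (0 : ℝ), w t ∈ C)
    (hsC : ∀ t > (0 : ℝ), s t ∈ C)
    (hw' : ∀ t > (0 : ℝ), HasDerivAt w (t⁻¹ • (s t - w t)) t)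
    (hopt : ∀ t > (0 : ℝ), ∀ v ∈ C, ⟪g' (w t), s t⟫ ≤ ⟪g' (w t), v⟫)
    (hzero : Tendsto (fun t => t * g (w t)) (nhdsWithin 0 (Set.Ioi 0)) (nhds 0)) :
    ∀ t > (0 : ℝ), f (w t) ≤ f w₀ := by
  set G : ℝ := g wstar with hG
  set h : ℝ → ℝ := fun t => t * g (w t) - t * G with hh
  -- derivative of h on (0,∞)
  have hderiv : ∀ t > (0 : ℝ),
      HasDerivAt h (g (w t) + ⟪g' (w t), s t - w t⟫ - G) t := by
    intro t ht
    have hgw : HasDerivAt (fun τ => g (w τ)) (t⁻¹ * ⟪g' (w t), s t - w t⟫) t := by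
      have hF := hasGradientAt_iff_hasFDerivAt.mp (hg' (w t))
      have := hF.comp_hasDerivAt t (hw' t ht)
      simp [inner_smul_right] at this
      exact this
    have hmul : HasDerivAt (fun τ => τ * g (w τ))
        (1 * g (w t) + t * (t⁻¹ * ⟪g' (w t), s t - w t⟫)) t :=
      (hasDerivAt_id t).mul hgw
    have hGt : HasDerivAt (fun τ : ℝ => τ * G) G t := by
      simpa using (hasDerivAt_id t).mul_const G
    have := hmul.sub hGt
    have harith : 1 * g (w t) + t * (t⁻¹ * ⟪g' (w t), s t - w t⟫) - G
        = g (w t) + ⟪g' (w t), s t - w t⟫ - G := by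
      field_simp
    rw [harith] at this
    exact this
  -- the derivative is nonpositive
  have hderiv_nonpos : ∀ t > (0 : ℝ), g (w t) + ⟪g' (w t), s t - w t⟫ - G ≤ 0 := by
    intro t ht
    have h1 : ⟪g' (w t), s t - w t⟫ ≤ ⟪g' (w t), wstar - w t⟫ := by
      rw [inner_sub_right, inner_sub_right]
      exact sub_le_sub_right (hopt t ht wstar hwstar) _
    have h2 : ⟪g' (w t), wstar - w t⟫ ≤ g wstar - g (w t) :=
      gradient_convex_ineq hg (hg' (w t))
    linarith
  -- h is antitone on (0,∞)
  have hanti : AntitoneOn h (Set.Ioi 0) := by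
    apply antitoneOn_of_deriv_nonpos (convex_Ioi (0 : ℝ))
    · intro t ht
      exact ((hderiv t ht).continuousAt).continuousWithinAt
    · intro t ht
      rw [interior_Ioi] at ht
      exact ((hderiv t ht).differentiableAt).differentiableWithinAt
    · intro t ht
      rw [interior_Ioi] at ht
      rw [(hderiv t ht).deriv]
      exact hderiv_nonpos t ht
  -- h tends to 0 at 0⁺
  have hlim : Tendsto h (nhdsWithin 0 (Set.Ioi 0)) (nhds 0) := by
    have h2 : Tendsto (fun t : ℝ => t * G) (nhdsWithin 0 (Set.Ioi 0)) (nhds 0) := by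
      have : Tendsto (fun t : ℝ => t * G) (nhds 0) (nhds (0 * G)) :=
        (continuous_id.mul continuous_const).tendsto 0
      simpa using this.mono_left nhdsWithin_le_nhds
    simpa using hzero.sub h2
  -- conclude h t ≤ 0 for t > 0
  have hle : ∀ t > (0 : ℝ), h t ≤ 0 := by
    intro t ht
    refine ge_of_tendsto hlim ?_
    filter_upwards [self_mem_nhdsWithin,
      Ioo_mem_nhdsGT_of_mem (Set.left_mem_Ico.mpr ht)] with τ hτ hτt
    exact hanti hτ ht (le_of_lt hτt.2)
  -- finish
  intro t ht
  have hgle : g (w t) ≤ G := by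
    have := hle t ht
    have : t * g (w t) ≤ t * G := by simp only [hh] at this; linarith
    exact le_of_mul_le_mul_left (by linarith) ht
  have hGw₀ : G ≤ f w₀ := by
    have := hmin w₀ hw₀
    rw [hgdef w₀, hp₀] at this
    simpa using this
  have hf : f (w t) ≤ g (w t) := by
    rw [hgdef (w t)]
    nlinarith [hp (w t) (hwC t ht)]
  linarith
end

section
/- Let D ⊆ ℝᵈ be a set, h : ℝᵈ → ℝᵐ a function, f : ℝᵈ → ℝ, and let α > 1, β > 0, 0 < ε ≤ z_max, and f_min be real numbers. Define the feasible set F = {(x, z) ∈ ℝᵈ × ℝᵐ : x ∈ D and ε ≤ zᵢ ≤ z_max for all i}. Assume: (i) f(x) ≥ f_min for all (x, z) ∈ F; (ii) there exists (x₀, z₀) ∈ F with h(x₀) + z₀ = 0; (iii) (x_p, z_p) ∈ F minimizes the penalized objective (x, z) ↦ f(x) + (β/α)·‖h(x) + z‖^α over F, where ‖·‖ is the Euclidean norm; and (iv) β ≥ α·(f(x₀) − f_min)·(2/ε)^α. Then h(x_p)ᵢ ≤ −ε/2 ≤ 0 for every coordinate i; that is, the minimizer of the penalized problem strictly satisfies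 all the inequality constraints h(x) ⪯ 0 of the original problem. -/
/-- Deterministic content of Theorem 2 of the paper (feasibility): for sufficiently
large penalty parameter `β`, any minimizer of the penalized problem PEN (with penalty
`(β/α)·‖h(x)+z‖ᵅ` and auxiliary variable `z` in the box `[ε, z_max]ᵐ`) strictly
satisfies all original constraints: `h(x_p)ᵢ ≤ −ε/2 ≤ 0` for every `i`. -/
theorem penalized_min_feasible
    {d m : ℕ} (D : Set (Fin d → ℝ))
    (h : (Fin d → ℝ) → EuclideanSpace ℝ (Fin m))
    (f : (Fin d → ℝ) → ℝ)
    (α β ε zmax fmin : ℝ)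
    (hα : 1 < α) (hβ : 0 < β) (hε : 0 < ε) (hεz : ε ≤ zmax)
    (F : Set ((Fin d → ℝ) × EuclideanSpace ℝ (Fin m)))
    (hF : F = {q | q.1 ∈ D ∧ ∀ i, ε ≤ q.2 i ∧ q.2 i ≤ zmax})
    (hfmin : ∀ q ∈ F, fmin ≤ f q.1)
    (x₀ : Fin d → ℝ) (z₀ : EuclideanSpace ℝ (Fin m))
    (h₀ : (x₀, z₀) ∈ F) (hfeas : h x₀ + z₀ = 0)
    (xp : Fin d → ℝ) (zp : EuclideanSpace ℝ (Fin m))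
    (hp : (xp, zp) ∈ F)
    (hmin : ∀ q ∈ F, f xp + (β / α) * ‖h xp + zp‖ ^ α ≤
      f q.1 + (β / α) * ‖h q.1 + q.2‖ ^ α)
    (hβbig : α * (f x₀ - fmin) * (2 / ε) ^ α ≤ β) :
    ∀ i, h xp i ≤ -(ε / 2) ∧ -(ε / 2) ≤ (0 : ℝ) := by
  have hα0 : (0 : ℝ) < α := lt_trans one_pos hα
  set N : ℝ := ‖h xp + zp‖ with hN
  have hN0 : 0 ≤ N := norm_nonneg _
  -- From the minimality at (x₀, z₀):
  have key := hmin (x₀, z₀) h₀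
  simp only [hfeas, norm_zero] at key
  rw [Real.zero_rpow (ne_of_gt hα0)] at key
  have hfmp : fmin ≤ f xp := hfmin (xp, zp) hp
  have hΔ0 : 0 ≤ f x₀ - fmin := sub_nonneg.mpr (hfmin (x₀, z₀) h₀)
  have h1 : (β / α) * N ^ α ≤ f x₀ - fmin := by nlinarith
  -- So N^α ≤ α (f x₀ - fmin) / β
  have h2 : N ^ α ≤ α * (f x₀ - fmin) / β := by
    rw [le_div_iff₀ hβ]
    have := mul_le_mul_of_nonneg_left h1 (le_of_lt hα0)
    calc N ^ α * β = α * ((β / α) * N ^ α) := by field_simp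
    _ ≤ α * (f x₀ - fmin) := this
  -- And α (f x₀ - fmin) / β ≤ (ε/2)^α
  have hhalf : (0:ℝ) < ε / 2 := by linarith
  have hinv : (2 / ε : ℝ) ^ α * (ε / 2 : ℝ) ^ α = 1 := by
    rw [← Real.mul_rpow (by positivity) (le_of_lt hhalf)]
    rw [show (2 / ε) * (ε / 2) = 1 by field_simp]
    exact Real.one_rpow α
  have h3 : α * (f x₀ - fmin) / β ≤ (ε / 2) ^ α := by
    rw [div_le_iff₀ hβ]
    calc α * (f x₀ - fmin) = α * (f x₀ - fmin) * (2 / ε) ^ α * (ε / 2) ^ α := by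
          rw [mul_assoc, hinv, mul_one]
    _ ≤ β * (ε / 2) ^ α := by
          apply mul_le_mul_of_nonneg_right hβbig (Real.rpow_nonneg (le_of_lt hhalf) α)
    _ = (ε / 2) ^ α * β := mul_comm _ _
  have hNle : N ≤ ε / 2 := by
    by_contra hc
    push_neg at hc
    have := Real.rpow_lt_rpow (le_of_lt hhalf) hc hα0
    linarith [le_trans h2 h3]
  intro i
  refine ⟨?_, by linarith⟩
  have hcoord : |(h xp + zp) i| ≤ N := by
    have := EuclideanSpace.norm_eq (h xp + zp)
    have hsq : |(h xp + zp) i| ^ 2 ≤ N ^ 2 := by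
      rw [hN, this, Real.sq_sqrt (by positivity)]
      have : |(h xp + zp) i| ^ 2 = ‖(h xp + zp) i‖ ^ 2 := by rw [Real.norm_eq_abs]
      rw [this]
      exact Finset.single_le_sum (f := fun j => ‖(h xp + zp) j‖ ^ 2)
        (fun j _ => by positivity) (Finset.mem_univ i)
    exact (pow_le_pow_iff_left₀ (abs_nonneg _) hN0 (by norm_num)).mp hsq
  have hz : ε ≤ zp i := by
    rw [hF] at hp
    exact (hp.2 i).1
  have habs : (h xp + zp) i ≤ ε / 2 := le_trans (le_of_abs_le hcoord) hNle
  have : h xp i + zp i ≤ ε / 2 := by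
    simpa using habs
  linarith
end
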